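/- arXiv:math/0701747 — 4 statements merged into one kernel-verified Lean document; each statement's English description precedes it below -/
import Mathlib

section
/- Let (P^t)_{t≥0} be a Feller Markov semigroup on ℝ^m. Suppose: (i) there exist x_* ∈ ℝ^m, ε_* > 0 and t_* > 0 such that inf over all x, y in the open ball B(x_*, ε_*) of [P^{t_*}(x,·) ∧ P^{t_*}(y,·)](ℝ^m) is strictly positive; (ii) for every R > 0 there exists t(R) > 0 such that x_* belongs to the support of the measure P^{t(R)}(x, ·) for every x with ‖x‖ ≤ R. Then the local Doeblin condition holds: for every R > 0, taking T = t(R) + t_*, one has inf over all x, y with ‖x‖ ≤ R and ‖y‖ ≤ R of [P^{T}(x,·) ∧ P^{T}(y,·)](ℝ^m) strictly positive. -/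
open MeasureTheory Filter Set ProbabilityTheory
open scoped ENNReal NNReal

section Aux

variable {X : Type*} [MeasurableSpace X]

/-- If two finite measures have a common minorant of mass `ε`, then `(μ ⊓ ν) univ ≥ ε`.
We construct the minorant from the Hahn decomposition. -/
lemma inf_univ_ge_of_hahn (μ ν : Measure X) [IsFiniteMeasure μ] [IsFiniteMeasure ν] :
    ∃ A : Set X, MeasurableSet A ∧ μ Aᶜ + ν A ≤ (μ ⊓ ν) univ := by
  obtain ⟨A, hA, h1, h2⟩ := hahn_decomposition (μ := μ) (ν := ν)
  refine ⟨A, hA, ?_⟩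
  set c : Measure X := μ.restrict Aᶜ + ν.restrict A with hc
  have hcμ : c ≤ μ := by
    rw [Measure.le_iff]
    intro s hs
    have hdec : μ (s ∩ A) + μ (s \ A) = μ s := measure_inter_add_diff s hA
    have : c s = μ (s ∩ Aᶜ) + ν (s ∩ A) := by
      simp [hc, Measure.restrict_apply hs]
    rw [this]
    have hνμ : ν (s ∩ A) ≤ μ (s ∩ A) := h1 _ (hs.inter hA) inter_subset_right
    calc μ (s ∩ Aᶜ) + ν (s ∩ A) ≤ μ (s ∩ Aᶜ) + μ (s ∩ A) := by gcongr
      _ = μ (s ∩ A) + μ (s \ A) := by rw [diff_eq, add_comm]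
      _ = μ s := hdec
  have hcν : c ≤ ν := by
    rw [Measure.le_iff]
    intro s hs
    have hdec : ν (s ∩ A) + ν (s \ A) = ν s := measure_inter_add_diff s hA
    have : c s = μ (s ∩ Aᶜ) + ν (s ∩ A) := by
      simp [hc, Measure.restrict_apply hs]
    rw [this]
    have hμν : μ (s ∩ Aᶜ) ≤ ν (s ∩ Aᶜ) := h2 _ (hs.inter hA.compl) inter_subset_right
    calc μ (s ∩ Aᶜ) + ν (s ∩ A) ≤ ν (s ∩ Aᶜ) + ν (s ∩ A) := by gcongr
      _ = ν (s ∩ A) + ν (s \ A) := by rw [diff_eq, add_comm]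
      _ = ν s := hdec
  have hcle : c ≤ μ ⊓ ν := le_inf hcμ hcν
  have : c univ = μ Aᶜ + ν A := by
    simp [hc, Measure.restrict_apply_univ]
  rw [← this]
  exact Measure.le_iff.1 hcle univ MeasurableSet.univ

end Aux

/-- Lemma 3.2 / Theorem 1.3 (final step): if a Feller Markov semigroup satisfies a
local Doeblin condition in a small ball around `xs` (condition derived from **N**) and the
topological irreducibility condition **S**, then the local Doeblin condition **LD** holds
on every bounded region, with `T = t(R) + t_*`. -/
theorem local_Doeblin_condition (m : ℕ)
    (P : ℝ≥0 → Kernel (EuclideanSpace ℝ (Fin m)) (EuclideanSpace ℝ (Fin m)))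
    (hMarkov : ∀ t, IsMarkovKernel (P t))
    (hP0 : ∀ x, P 0 x = Measure.dirac x)
    (hCK : ∀ s t : ℝ≥0, ∀ x, P (s + t) x = (P s x).bind (fun y => P t y))
    (hFeller : ∀ (t : ℝ≥0) (f : BoundedContinuousFunction (EuclideanSpace ℝ (Fin m)) ℝ),
      Continuous fun x => ∫ y, f y ∂(P t x))
    -- (i) local Doeblin condition in a small ball
    (xs : EuclideanSpace ℝ (Fin m)) (εs : ℝ) (ts : ℝ≥0) (hεs : 0 < εs) (hts : 0 < ts)
    (hglue : 0 < ⨅ (x ∈ Metric.ball xs εs) (y ∈ Metric.ball xs εs),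
      (P ts x ⊓ P ts y) univ)
    -- (ii) topological irreducibility: `xs` is in the support of `P (tR R) x` for `‖x‖ ≤ R`
    (tR : ℝ → ℝ≥0)
    (hsupp : ∀ R > (0 : ℝ), 0 < tR R ∧ ∀ x : EuclideanSpace ℝ (Fin m), ‖x‖ ≤ R →
      ∀ U : Set (EuclideanSpace ℝ (Fin m)), IsOpen U → xs ∈ U → 0 < P (tR R) x U) :
    ∀ R > (0 : ℝ),
      0 < ⨅ (x : EuclideanSpace ℝ (Fin m)) (_ : ‖x‖ ≤ R)
            (y : EuclideanSpace ℝ (Fin m)) (_ : ‖y‖ ≤ R),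
          (P (tR R + ts) x ⊓ P (tR R + ts) y) univ := by
  haveI := hMarkov
  intro R hR
  obtain ⟨htR, hsupp'⟩ := hsupp R hR
  set B : Set (EuclideanSpace ℝ (Fin m)) := Metric.ball xs εs with hB
  set δ : ℝ≥0∞ := ⨅ (x ∈ Metric.ball xs εs) (y ∈ Metric.ball xs εs),
      (P ts x ⊓ P ts y) univ with hδ
  -- a continuous bump function between the balls of radius εs/2 and εs
  set φ : EuclideanSpace ℝ (Fin m) → ℝ := fun z => max 0 (min 1 (2 - 2 / εs * dist z xs)) with hφ
  have hφcont : Continuous φ :=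
    continuous_const.max (continuous_const.min
      (continuous_const.sub (continuous_const.mul ((continuous_id.dist continuous_const)))))
  have hφ0 : ∀ z, 0 ≤ φ z := fun z => le_max_left _ _
  have hφ1 : ∀ z, φ z ≤ 1 := fun z => max_le zero_le_one (min_le_left _ _)
  have hφeq1 : ∀ z, dist z xs ≤ εs / 2 → φ z = 1 := by
    intro z hz
    have h2 : (1 : ℝ) ≤ 2 - 2 / εs * dist z xs := by
      rw [le_sub_iff_add_le]
      have : 2 / εs * dist z xs ≤ 2 / εs * (εs / 2) := by
        apply mul_le_mul_of_nonneg_left hz (by positivity)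
      have h4 : 2 / εs * (εs / 2) = 1 := by field_simp
      linarith
    simp [hφ, min_eq_left h2]
  have hφeq0 : ∀ z, εs ≤ dist z xs → φ z = 0 := by
    intro z hz
    have h2 : 2 - 2 / εs * dist z xs ≤ 0 := by
      have : 2 / εs * εs ≤ 2 / εs * dist z xs :=
        mul_le_mul_of_nonneg_left hz (by positivity)
      have h3 : 2 / εs * εs = 2 := by field_simp
      linarith
    have : min 1 (2 - 2 / εs * dist z xs) ≤ 0 := (min_le_right _ _).trans h2
    simp only [hφ]
    exact max_eq_left this
  set g : BoundedContinuousFunction (EuclideanSpace ℝ (Fin m)) ℝ :=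
    BoundedContinuousFunction.ofNormedAddCommGroup φ hφcont 1
      (fun z => by rw [Real.norm_eq_abs, abs_le]; exact ⟨by linarith [hφ0 z], hφ1 z⟩) with hg
  -- the function h x = ∫ φ d(P (tR R) x) is continuous and positive on the closed ball
  set h : EuclideanSpace ℝ (Fin m) → ℝ := fun x => ∫ z, φ z ∂(P (tR R) x) with hh
  have hhcont : Continuous h := hFeller (tR R) g
  have hφint : ∀ (μ : Measure (EuclideanSpace ℝ (Fin m))) [IsProbabilityMeasure μ], Integrable φ μ := by
    intro μ _
    exact g.integrable μ
  have hlow : ∀ x : EuclideanSpace ℝ (Fin m), (P (tR R) x (Metric.ball xs (εs / 2))).toReal ≤ h x := by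
    intro x
    set μ := P (tR R) x
    have l1 : ∫ z in Metric.ball xs (εs / 2), φ z ∂μ
        = (μ (Metric.ball xs (εs / 2))).toReal := by
      rw [setIntegral_congr_fun measurableSet_ball
        (fun z hz => hφeq1 z (le_of_lt (Metric.mem_ball.1 hz)))]
      rw [setIntegral_const, smul_eq_mul, mul_one]; rfl
    have l2 : ∫ z in Metric.ball xs (εs / 2), φ z ∂μ ≤ ∫ z, φ z ∂μ :=
      setIntegral_le_integral (hφint μ) (ae_of_all _ hφ0)
    rw [← l1]; exact l2
  have hup : ∀ x : EuclideanSpace ℝ (Fin m), h x ≤ (P (tR R) x B).toReal := by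
    intro x
    set μ := P (tR R) x
    have hle : ∀ z, φ z ≤ B.indicator (fun _ => (1 : ℝ)) z := by
      intro z
      by_cases hz : z ∈ B
      · rw [indicator_of_mem hz]; exact hφ1 z
      · rw [indicator_of_notMem hz, hφeq0 z (by simpa [hB, Metric.mem_ball, not_lt] using hz)]
    have := integral_mono (hφint μ)
      ((integrable_const (1 : ℝ)).indicator measurableSet_ball) hle
    rwa [integral_indicator_const _ measurableSet_ball, smul_eq_mul, mul_one] at this
  have hpos : ∀ x : EuclideanSpace ℝ (Fin m), ‖x‖ ≤ R → 0 < h x := by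
    intro x hx
    have hmpos : 0 < P (tR R) x (Metric.ball xs (εs / 2)) :=
      hsupp' x hx _ Metric.isOpen_ball (Metric.mem_ball_self (by linarith))
    have : 0 < (P (tR R) x (Metric.ball xs (εs / 2))).toReal :=
      ENNReal.toReal_pos hmpos.ne' (measure_ne_top _ _)
    exact lt_of_lt_of_le this (hlow x)
  -- minimum of h on the compact closed ball
  have hKc : IsCompact (Metric.closedBall (0 : EuclideanSpace ℝ (Fin m)) R) := isCompact_closedBall 0 R
  obtain ⟨x₀, hx₀, hmin⟩ := hKc.exists_isMinOn
    ⟨0, Metric.mem_closedBall_self hR.le⟩ hhcont.continuousOn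
  set α : ℝ := h x₀ with hα
  have hαpos : 0 < α := hpos x₀ (by simpa [mem_closedBall_zero_iff] using hx₀)
  have hαball : ∀ x : EuclideanSpace ℝ (Fin m), ‖x‖ ≤ R → ENNReal.ofReal α ≤ P (tR R) x B := by
    intro x hx
    have h1 : α ≤ h x := hmin (by simpa [mem_closedBall_zero_iff] using hx)
    have h2 : h x ≤ (P (tR R) x B).toReal := hup x
    calc ENNReal.ofReal α ≤ ENNReal.ofReal ((P (tR R) x B).toReal) :=
        ENNReal.ofReal_le_ofReal (h1.trans h2)
      _ = P (tR R) x B := ENNReal.ofReal_toReal (measure_ne_top _ _)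
  -- the key estimate for a fixed pair (x, y)
  have key : ∀ x : EuclideanSpace ℝ (Fin m), ‖x‖ ≤ R → ∀ y : EuclideanSpace ℝ (Fin m), ‖y‖ ≤ R →
      ENNReal.ofReal α * δ ≤ (P (tR R + ts) x ⊓ P (tR R + ts) y) univ := by
    intro x hx y hy
    set μ := P (tR R + ts) x with hμ
    set ν := P (tR R + ts) y with hν
    obtain ⟨A, hA, hAkey⟩ := inf_univ_ge_of_hahn μ ν
    refine le_trans ?_ hAkey
    have hbindx : μ Aᶜ = ∫⁻ z, P ts z Aᶜ ∂(P (tR R) x) := by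
      rw [hμ, hCK (tR R) ts x,
        Measure.bind_apply hA.compl ((P ts).measurable.aemeasurable)]
    have hbindy : ν A = ∫⁻ z, P ts z A ∂(P (tR R) y) := by
      rw [hν, hCK (tR R) ts y,
        Measure.bind_apply hA ((P ts).measurable.aemeasurable)]
    set c₁ : ℝ≥0∞ := ⨅ (z : B), P ts (z : EuclideanSpace ℝ (Fin m)) Aᶜ with hc₁
    set c₂ : ℝ≥0∞ := ⨅ (w : B), P ts (w : EuclideanSpace ℝ (Fin m)) A with hc₂
    have hx1 : c₁ * ENNReal.ofReal α ≤ μ Aᶜ := by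
      rw [hbindx]
      calc c₁ * ENNReal.ofReal α ≤ c₁ * P (tR R) x B := by
            gcongr
            exact hαball x hx
        _ = ∫⁻ _ in B, c₁ ∂(P (tR R) x) := by rw [setLIntegral_const, mul_comm]
        _ ≤ ∫⁻ z in B, P ts z Aᶜ ∂(P (tR R) x) := by
            apply setLIntegral_mono ((P ts).measurable_coe hA.compl)
            intro z hz
            exact iInf_le (fun z : B => P ts (z : EuclideanSpace ℝ (Fin m)) Aᶜ) ⟨z, hz⟩
        _ ≤ ∫⁻ z, P ts z Aᶜ ∂(P (tR R) x) :=
            lintegral_mono' Measure.restrict_le_self le_rfl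
    have hy1 : c₂ * ENNReal.ofReal α ≤ ν A := by
      rw [hbindy]
      calc c₂ * ENNReal.ofReal α ≤ c₂ * P (tR R) y B := by
            gcongr
            exact hαball y hy
        _ = ∫⁻ _ in B, c₂ ∂(P (tR R) y) := by rw [setLIntegral_const, mul_comm]
        _ ≤ ∫⁻ w in B, P ts w A ∂(P (tR R) y) := by
            apply setLIntegral_mono ((P ts).measurable_coe hA)
            intro w hw
            exact iInf_le (fun w : B => P ts (w : EuclideanSpace ℝ (Fin m)) A) ⟨w, hw⟩
        _ ≤ ∫⁻ w, P ts w A ∂(P (tR R) y) :=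
            lintegral_mono' Measure.restrict_le_self le_rfl
    have hδle : δ ≤ c₁ + c₂ := by
      rw [hc₁, hc₂, ENNReal.iInf_add]
      refine le_iInf fun z => ?_
      rw [ENNReal.add_iInf]
      refine le_iInf fun w => ?_
      have hzB : (z : EuclideanSpace ℝ (Fin m)) ∈ Metric.ball xs εs := z.2
      have hwB : (w : EuclideanSpace ℝ (Fin m)) ∈ Metric.ball xs εs := w.2
      have hδ1 : δ ≤ (P ts (z : EuclideanSpace ℝ (Fin m)) ⊓ P ts (w : EuclideanSpace ℝ (Fin m))) univ := by
        rw [hδ]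
        refine iInf_le_of_le (z : EuclideanSpace ℝ (Fin m)) ?_
        refine iInf_le_of_le hzB ?_
        refine iInf_le_of_le (w : EuclideanSpace ℝ (Fin m)) ?_
        exact iInf_le_of_le hwB le_rfl
      refine hδ1.trans ?_
      have hsplit : (P ts (z : EuclideanSpace ℝ (Fin m)) ⊓ P ts (w : EuclideanSpace ℝ (Fin m))) univ
          ≤ (P ts (z : EuclideanSpace ℝ (Fin m)) ⊓ P ts (w : EuclideanSpace ℝ (Fin m))) Aᶜ + (P ts (z : EuclideanSpace ℝ (Fin m)) ⊓ P ts (w : EuclideanSpace ℝ (Fin m))) A := by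
        have : (univ : Set (EuclideanSpace ℝ (Fin m))) = Aᶜ ∪ A := by simp
        rw [this]
        exact measure_union_le _ _
      refine hsplit.trans ?_
      gcongr
      · exact inf_le_left
      · exact inf_le_right
    calc ENNReal.ofReal α * δ ≤ ENNReal.ofReal α * (c₁ + c₂) := by gcongr
      _ = c₁ * ENNReal.ofReal α + c₂ * ENNReal.ofReal α := by ring
      _ ≤ μ Aᶜ + ν A := add_le_add hx1 hy1
  have hlb : 0 < ENNReal.ofReal α * δ :=
    ENNReal.mul_pos (ENNReal.ofReal_pos.2 hαpos).ne' hglue.ne'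
  refine lt_of_lt_of_le hlb ?_
  refine le_iInf fun x => le_iInf fun hx => le_iInf fun y => le_iInf fun hy => ?_
  exact key x hx y hy
end

section
/- Suppose that on a neighborhood O of a point x_* ∈ ℝ^m the jump coefficient has the form c(x,u) = χ(x)u + δ̃(x,u), where χ ∈ C¹(O, ℝ^{m×d}), ã ∈ C¹(O, ℝ^m), δ̃(·,u) is differentiable in x, and ‖δ̃(x_*,u)‖ + ‖∇_x δ̃(x_*,u)‖ = o(‖u‖) as ‖u‖ → 0. Let A be the m×d matrix A = ∇ã(x_*)·χ(x_*) − Dχ(x_*)[ã(x_*)] (the second term being the derivative of x ↦ χ(x) at x_* in the direction ã(x_*)). Then for all u ∈ ℝ^d of sufficiently small norm one has u ∈ Θ_{x_*} (i.e. I + ∇_x c(x_*,u) is invertible), and Δ̂(x_*, u) = A u + o(‖u‖) as ‖u‖ → 0. -/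
open MeasureTheory Filter Set Asymptotics
open scoped Topology RealInnerProductSpace

set_option maxHeartbeats 1000000
set_option synthInstance.maxHeartbeats 400000

/-- Expansion of `Δ̂(x_*, u) = A u + o(‖u‖)` (formula (4.7) in the proof of Proposition 4.3):
if `c(x,u) = χ(x) u + δ̃(x,u)` near `x_*` with `‖δ̃(x_*,u)‖ + ‖∇_x δ̃(x_*,u)‖ = o(‖u‖)`,
then for small `u` the matrix `I + ∇_x c(x_*,u)` is invertible (i.e. `u ∈ Θ_{x_*}`) and
`Δ̂(x_*,u) = A u + o(‖u‖)` with `A = ∇ã(x_*)·χ(x_*) − Dχ(x_*)[ã(x_*)]`. -/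
theorem Delta_hat_expansion (m d : ℕ)
    (atil : EuclideanSpace ℝ (Fin m) → EuclideanSpace ℝ (Fin m))
    (c : EuclideanSpace ℝ (Fin m) → EuclideanSpace ℝ (Fin d) → EuclideanSpace ℝ (Fin m))
    (hcdiff : ∀ (u : EuclideanSpace ℝ (Fin d)) (x : EuclideanSpace ℝ (Fin m)),
      DifferentiableAt ℝ (fun y => c y u) x)
    (xs : EuclideanSpace ℝ (Fin m)) (O : Set (EuclideanSpace ℝ (Fin m))) (hO : O ∈ 𝓝 xs)
    (χ : EuclideanSpace ℝ (Fin m) →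
      (EuclideanSpace ℝ (Fin d) →L[ℝ] EuclideanSpace ℝ (Fin m)))
    (δtil : EuclideanSpace ℝ (Fin m) → EuclideanSpace ℝ (Fin d) → EuclideanSpace ℝ (Fin m))
    (hdecomp : ∀ x ∈ O, ∀ u, c x u = χ x u + δtil x u)
    (hχ : ContDiffOn ℝ 1 χ O) (hatil : ContDiffOn ℝ 1 atil O)
    (hδdiff : ∀ (u : EuclideanSpace ℝ (Fin d)), ∀ x ∈ O,
      DifferentiableAt ℝ (fun y => δtil y u) x)
    (hlittle : (fun u : EuclideanSpace ℝ (Fin d) =>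
        ‖δtil xs u‖ + ‖fderiv ℝ (fun y => δtil y u) xs‖)
      =o[𝓝 0] (fun u : EuclideanSpace ℝ (Fin d) => ‖u‖)) :
    (∃ ε > (0 : ℝ), ∀ u : EuclideanSpace ℝ (Fin d), ‖u‖ < ε →
      IsUnit ((1 : EuclideanSpace ℝ (Fin m) →L[ℝ] EuclideanSpace ℝ (Fin m))
        + fderiv ℝ (fun y => c y u) xs)) ∧
    (fun u : EuclideanSpace ℝ (Fin d) =>
        (Ring.inverse ((1 : EuclideanSpace ℝ (Fin m) →L[ℝ] EuclideanSpace ℝ (Fin m))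
            + fderiv ℝ (fun y => c y u) xs))
          (atil (xs + c xs u) - atil xs - (fderiv ℝ (fun y => c y u) xs) (atil xs))
        - ((fderiv ℝ atil xs).comp (χ xs) - fderiv ℝ χ xs (atil xs)) u)
      =o[𝓝 0] (fun u : EuclideanSpace ℝ (Fin d) => u) := by
  classical
  have hxsO : xs ∈ O := mem_of_mem_nhds hO
  set T : (EuclideanSpace ℝ (Fin m)) →L[ℝ] (EuclideanSpace ℝ (Fin m)) := fderiv ℝ atil xs with hT
  set M : (EuclideanSpace ℝ (Fin m)) →L[ℝ] ((EuclideanSpace ℝ (Fin d)) →L[ℝ] (EuclideanSpace ℝ (Fin m))) := fderiv ℝ χ xs with hM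
  set X : (EuclideanSpace ℝ (Fin d)) →L[ℝ] (EuclideanSpace ℝ (Fin m)) := χ xs with hXdef
  set a0 : (EuclideanSpace ℝ (Fin m)) := atil xs with ha0
  have hχd : DifferentiableAt ℝ χ xs := (hχ.contDiffAt hO).differentiableAt one_ne_zero
  have hatild : DifferentiableAt ℝ atil xs := (hatil.contDiffAt hO).differentiableAt one_ne_zero
  set D : (EuclideanSpace ℝ (Fin d)) → ((EuclideanSpace ℝ (Fin m)) →L[ℝ] (EuclideanSpace ℝ (Fin m))) := fun u => fderiv ℝ (fun y => δtil y u) xs with hDdef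
  set B : (EuclideanSpace ℝ (Fin d)) → ((EuclideanSpace ℝ (Fin m)) →L[ℝ] (EuclideanSpace ℝ (Fin m))) := fun u => fderiv ℝ (fun y => c y u) xs with hBdef
  have hBeq : ∀ u, B u = M.flip u + D u := by
    intro u
    have hev : (fun y => c y u) =ᶠ[𝓝 xs] fun y => χ y u + δtil y u :=
      Filter.eventually_of_mem hO (fun y hy => hdecomp y hy u)
    have h1 : HasFDerivAt (fun y => χ y u) (M.flip u) xs := by
      have h := (ContinuousLinearMap.apply ℝ (EuclideanSpace ℝ (Fin m)) u).hasFDerivAt.comp xs hχd.hasFDerivAt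
      have he : (ContinuousLinearMap.apply ℝ (EuclideanSpace ℝ (Fin m)) u).comp M = M.flip u := by
        ext h'
        simp [ContinuousLinearMap.apply_apply]
      rw [he] at h
      exact h
    have h2 : HasFDerivAt (fun y => δtil y u) (D u) xs := (hδdiff u xs hxsO).hasFDerivAt
    calc B u = fderiv ℝ (fun y => χ y u + δtil y u) xs := hev.fderiv_eq
    _ = M.flip u + D u := (h1.add h2).fderiv
  -- little-o facts
  have hδo : (fun u : (EuclideanSpace ℝ (Fin d)) => δtil xs u) =o[𝓝 0] (fun u : (EuclideanSpace ℝ (Fin d)) => u) := by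
    have h1 : (fun u : (EuclideanSpace ℝ (Fin d)) => δtil xs u) =O[𝓝 0] (fun u => ‖δtil xs u‖ + ‖D u‖) :=
      isBigO_of_le _ (fun u => by
        have hn : (0:ℝ) ≤ ‖δtil xs u‖ + ‖D u‖ := by positivity
        rw [Real.norm_eq_abs, abs_of_nonneg hn]
        exact le_add_of_nonneg_right (norm_nonneg _))
    exact (h1.trans_isLittleO hlittle).of_norm_right
  have hDo : (fun u : (EuclideanSpace ℝ (Fin d)) => D u) =o[𝓝 0] (fun u : (EuclideanSpace ℝ (Fin d)) => u) := by
    have h1 : (fun u : (EuclideanSpace ℝ (Fin d)) => D u) =O[𝓝 0] (fun u => ‖δtil xs u‖ + ‖D u‖) :=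
      isBigO_of_le _ (fun u => by
        have hn : (0:ℝ) ≤ ‖δtil xs u‖ + ‖D u‖ := by positivity
        rw [Real.norm_eq_abs, abs_of_nonneg hn]
        exact le_add_of_nonneg_left (norm_nonneg _))
    exact (h1.trans_isLittleO hlittle).of_norm_right
  have hcO : (fun u : (EuclideanSpace ℝ (Fin d)) => c xs u) =O[𝓝 0] (fun u : (EuclideanSpace ℝ (Fin d)) => u) := by
    have : (fun u : (EuclideanSpace ℝ (Fin d)) => c xs u) = fun u => X u + δtil xs u := by
      funext u; exact hdecomp xs hxsO u
    rw [this]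
    exact (X.isBigO_id _).add hδo.isBigO
  have hBO : (fun u : (EuclideanSpace ℝ (Fin d)) => B u) =O[𝓝 0] (fun u : (EuclideanSpace ℝ (Fin d)) => u) := by
    have : (fun u : (EuclideanSpace ℝ (Fin d)) => B u) = fun u => M.flip u + D u := funext hBeq
    rw [this]
    exact (M.flip.isBigO_id _).add hDo.isBigO
  have hid0 : Tendsto (fun u : (EuclideanSpace ℝ (Fin d)) => u) (𝓝 0) (𝓝 0) := tendsto_id
  have hBt : Tendsto B (𝓝 0) (𝓝 0) := hBO.trans_tendsto hid0
  have hone : Tendsto (fun u : (EuclideanSpace ℝ (Fin d)) => (1 : (EuclideanSpace ℝ (Fin m)) →L[ℝ] (EuclideanSpace ℝ (Fin m))) + B u) (𝓝 0) (𝓝 (1 : (EuclideanSpace ℝ (Fin m)) →L[ℝ] (EuclideanSpace ℝ (Fin m)))) := by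
    have := (tendsto_const_nhds (x := (1 : EuclideanSpace ℝ (Fin m) →L[ℝ] EuclideanSpace ℝ (Fin m))) (f := 𝓝 (0 : EuclideanSpace ℝ (Fin d)))).add hBt
    simpa using this
  set g : (EuclideanSpace ℝ (Fin d)) → ((EuclideanSpace ℝ (Fin m)) →L[ℝ] (EuclideanSpace ℝ (Fin m))) := fun u => Ring.inverse ((1 : (EuclideanSpace ℝ (Fin m)) →L[ℝ] (EuclideanSpace ℝ (Fin m))) + B u) with hgdef
  have hg : Tendsto g (𝓝 0) (𝓝 1) := by
    have hc : ContinuousAt Ring.inverse ((1 : ((EuclideanSpace ℝ (Fin m)) →L[ℝ] (EuclideanSpace ℝ (Fin m)))ˣ) : (EuclideanSpace ℝ (Fin m)) →L[ℝ] (EuclideanSpace ℝ (Fin m))) :=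
      NormedRing.inverse_continuousAt 1
    have := hc.tendsto.comp hone
    simpa [Function.comp_def, hgdef] using this
  -- invertibility part
  have hsmall : ∀ᶠ u in 𝓝 (0 : (EuclideanSpace ℝ (Fin d))), ‖B u‖ < 1 := by
    have : Metric.ball (0 : (EuclideanSpace ℝ (Fin m)) →L[ℝ] (EuclideanSpace ℝ (Fin m))) 1 ∈ 𝓝 (0 : (EuclideanSpace ℝ (Fin m)) →L[ℝ] (EuclideanSpace ℝ (Fin m))) := Metric.ball_mem_nhds _ one_pos
    filter_upwards [hBt this] with u hu
    simpa [mem_ball_zero_iff] using hu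
  obtain ⟨ε, hε, hball⟩ := Metric.eventually_nhds_iff_ball.1 hsmall
  have hunit : ∀ u : (EuclideanSpace ℝ (Fin d)), ‖u‖ < ε → IsUnit ((1 : (EuclideanSpace ℝ (Fin m)) →L[ℝ] (EuclideanSpace ℝ (Fin m))) + B u) := by
    intro u hu
    have hBu : ‖B u‖ < 1 := hball u (by simpa [mem_ball_zero_iff] using hu)
    have hn : ‖-(B u)‖ < 1 := by simpa using hBu
    exact ⟨Units.oneSub (-(B u)) hn, by simp [Units.oneSub, sub_neg_eq_add]⟩
  refine ⟨⟨ε, hε, hunit⟩, ?_⟩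
  -- main expansion
  have he1 : (fun u : (EuclideanSpace ℝ (Fin d)) => atil (xs + c xs u) - a0 - T (c xs u)) =o[𝓝 0] (fun u : (EuclideanSpace ℝ (Fin d)) => u) := by
    have h0 := hasFDerivAt_iff_isLittleO_nhds_zero.1 hatild.hasFDerivAt
    have hct : Tendsto (fun u : (EuclideanSpace ℝ (Fin d)) => c xs u) (𝓝 0) (𝓝 0) := hcO.trans_tendsto hid0
    exact (h0.comp_tendsto hct).trans_isBigO hcO
  have he2 : (fun u : (EuclideanSpace ℝ (Fin d)) => T (δtil xs u)) =o[𝓝 0] (fun u : (EuclideanSpace ℝ (Fin d)) => u) :=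
    (T.isBigO_comp _ _).trans_isLittleO hδo
  have he3 : (fun u : (EuclideanSpace ℝ (Fin d)) => (D u) a0) =o[𝓝 0] (fun u : (EuclideanSpace ℝ (Fin d)) => u) := by
    have h := (ContinuousLinearMap.apply ℝ (EuclideanSpace ℝ (Fin m)) a0).isBigO_comp D (𝓝 0)
    simpa [ContinuousLinearMap.apply_apply] using h.trans_isLittleO hDo
  set V : (EuclideanSpace ℝ (Fin d)) → (EuclideanSpace ℝ (Fin m)) := fun u => (atil (xs + c xs u) - a0 - T (c xs u)) + T (δtil xs u) - (D u) a0
    with hVdef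
  have hV : V =o[𝓝 0] (fun u : (EuclideanSpace ℝ (Fin d)) => u) := (he1.add he2).sub he3
  set W : (EuclideanSpace ℝ (Fin d)) →L[ℝ] (EuclideanSpace ℝ (Fin m)) := T.comp X - M a0 with hWdef
  have key : (fun u : (EuclideanSpace ℝ (Fin d)) =>
      (Ring.inverse ((1 : (EuclideanSpace ℝ (Fin m)) →L[ℝ] (EuclideanSpace ℝ (Fin m))) + fderiv ℝ (fun y => c y u) xs))
        (atil (xs + c xs u) - atil xs - (fderiv ℝ (fun y => c y u) xs) (atil xs))
      - ((fderiv ℝ atil xs).comp (χ xs) - fderiv ℝ χ xs (atil xs)) u)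
      = fun u => g u (V u) + (g u (W u) - W u) := by
    funext u
    have hBu : fderiv ℝ (fun y => c y u) xs = B u := rfl
    have hc' : c xs u = X u + δtil xs u := hdecomp xs hxsO u
    have hU : atil (xs + c xs u) - atil xs - (B u) a0 = V u + W u := by
      rw [hBeq u, hVdef]
      simp only [ContinuousLinearMap.add_apply, ContinuousLinearMap.flip_apply,
        ContinuousLinearMap.sub_apply, ContinuousLinearMap.comp_apply, hWdef]
      rw [hc']
      rw [map_add]
      abel
    rw [hBu, hU]
    have : ((fderiv ℝ atil xs).comp (χ xs) - fderiv ℝ χ xs (atil xs)) = W := rfl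
    rw [this, map_add]
    abel
  rw [key]
  -- two little-o pieces
  have hgO : g =O[𝓝 0] (fun _ : (EuclideanSpace ℝ (Fin d)) => (1 : ℝ)) := hg.isBigO_one ℝ
  have S1 : (fun u : (EuclideanSpace ℝ (Fin d)) => g u (V u)) =o[𝓝 0] (fun u : (EuclideanSpace ℝ (Fin d)) => u) := by
    have h1 : (fun u : (EuclideanSpace ℝ (Fin d)) => g u (V u)) =O[𝓝 0] (fun u => ‖g u‖ * ‖V u‖) :=
      isBigO_of_le _ (fun u => by
        rw [Real.norm_eq_abs, abs_of_nonneg (mul_nonneg (norm_nonneg _) (norm_nonneg _))]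
        exact (g u).le_opNorm (V u))
    have h2 : (fun u : (EuclideanSpace ℝ (Fin d)) => ‖g u‖ * ‖V u‖) =o[𝓝 0] (fun u : (EuclideanSpace ℝ (Fin d)) => 1 * ‖u‖) :=
      hgO.norm_left.mul_isLittleO hV.norm_norm
    have h3 := h1.trans_isLittleO h2
    simp only [one_mul] at h3
    exact h3.of_norm_right
  have S2 : (fun u : (EuclideanSpace ℝ (Fin d)) => g u (W u) - W u) =o[𝓝 0] (fun u : (EuclideanSpace ℝ (Fin d)) => u) := by
    have heq : (fun u : (EuclideanSpace ℝ (Fin d)) => g u (W u) - W u) = fun u => (g u - 1) (W u) := by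
      funext u
      simp [ContinuousLinearMap.sub_apply]
    rw [heq]
    have hgm1 : (fun u : (EuclideanSpace ℝ (Fin d)) => ‖g u - 1‖) =o[𝓝 0] (fun _ : (EuclideanSpace ℝ (Fin d)) => (1 : ℝ)) := by
      rw [isLittleO_one_iff]
      have : Tendsto (fun u : (EuclideanSpace ℝ (Fin d)) => g u - 1) (𝓝 0) (𝓝 (1 - 1)) := hg.sub tendsto_const_nhds
      simpa using (tendsto_zero_iff_norm_tendsto_zero.1 (by simpa using this))
    have hWO : (fun u : (EuclideanSpace ℝ (Fin d)) => ‖W u‖) =O[𝓝 0] (fun u : (EuclideanSpace ℝ (Fin d)) => ‖u‖) := (W.isBigO_id _).norm_norm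
    have h1 : (fun u : (EuclideanSpace ℝ (Fin d)) => (g u - 1) (W u)) =O[𝓝 0] (fun u => ‖g u - 1‖ * ‖W u‖) :=
      isBigO_of_le _ (fun u => by
        rw [Real.norm_eq_abs, abs_of_nonneg (mul_nonneg (norm_nonneg _) (norm_nonneg _))]
        exact (g u - 1).le_opNorm (W u))
    have h2 : (fun u : (EuclideanSpace ℝ (Fin d)) => ‖g u - 1‖ * ‖W u‖) =o[𝓝 0] (fun u : (EuclideanSpace ℝ (Fin d)) => 1 * ‖u‖) :=
      hgm1.mul_isBigO hWO
    have h3 := h1.trans_isLittleO h2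
    simp only [one_mul] at h3
    exact h3.of_norm_right
  exact S1.add S2
end

section
/- The Markov chain defined by Q is topologically irreducible: for every point z of the circle 𝕋 and every nonempty open subset U ⊆ 𝕋, there exists n ∈ ℕ with Q^n(z, U) > 0. Equivalently, for every z the union over n of the supports of the measures Q^n(z, ·) is dense in 𝕋. -/
open MeasureTheory
open scoped ENNReal

/-- The representative in `[0,1)` of a point of the unit circle `𝕋 = ℝ/ℤ`. -/
noncomputable def circleRep (z : UnitAddCircle) : ℝ :=
  ((AddCircle.equivIco 1 0 z : Set.Ico (0 : ℝ) (0 + 1)) : ℝ)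

/-- The Markov kernel `Q(z,·) = (1−3p)·δ_{3z} + p·(δ_{z̄/3} + δ_{(z̄+1)/3} + δ_{(z̄+2)/3})`
on the circle, arithmetic taken modulo 1. -/
noncomputable def Qkern (p : ℝ) (z : UnitAddCircle) : Measure UnitAddCircle :=
  ENNReal.ofReal (1 - 3 * p) • Measure.dirac (((3 * circleRep z : ℝ) : UnitAddCircle))
    + ENNReal.ofReal p •
      (Measure.dirac (((circleRep z / 3 : ℝ) : UnitAddCircle))
        + Measure.dirac ((((circleRep z + 1) / 3 : ℝ) : UnitAddCircle))
        + Measure.dirac ((((circleRep z + 2) / 3 : ℝ) : UnitAddCircle)))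

/-- The `n`-step transition kernel `Q^n`. -/
noncomputable def Qiter (p : ℝ) : ℕ → UnitAddCircle → Measure UnitAddCircle
  | 0, z => Measure.dirac z
  | n + 1, z => (Qiter p n z).bind (Qkern p)

lemma circleRep_mem (z : UnitAddCircle) : circleRep z ∈ Set.Ico (0:ℝ) 1 := by
  have h := (AddCircle.equivIco 1 0 z).2
  simpa [circleRep] using h

lemma coe_circleRep (z : UnitAddCircle) : ((circleRep z : ℝ) : UnitAddCircle) = z := by
  have := (AddCircle.equivIco 1 0).symm_apply_apply z
  exact this

lemma circleRep_coe {x : ℝ} (h0 : 0 ≤ x) (h1 : x < 1) : circleRep ((x : ℝ) : UnitAddCircle) = x := by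
  have h := AddCircle.coe_equivIco_mk_apply (1:ℝ) x
  unfold circleRep
  rw [h]
  simp [Int.fract_eq_self.mpr ⟨h0, h1⟩]

lemma measurable_circleRep : Measurable circleRep :=
  measurable_subtype_coe.comp (AddCircle.measurableEquivIco (1:ℝ) 0).measurable

lemma norm_coe_le (x : ℝ) : ‖((x : ℝ) : UnitAddCircle)‖ ≤ |x| := by
  simpa [Real.norm_eq_abs] using QuotientAddGroup.norm_mk_le_norm (S := AddSubgroup.zmultiples (1:ℝ)) (m := x)


lemma measurable_coe_comp {f : UnitAddCircle → ℝ} (hf : Measurable f) :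
    Measurable fun z => ((f z : ℝ) : UnitAddCircle) :=
  AddCircle.measurable_mk'.comp hf

lemma measurable_Qkern (p : ℝ) : Measurable (Qkern p) := by
  apply Measure.measurable_of_measurable_coe
  intro s hs
  simp only [Qkern, Measure.coe_add, Measure.coe_smul, Pi.add_apply, Pi.smul_apply,
    smul_eq_mul, Measure.add_apply]
  have hd : ∀ f : UnitAddCircle → ℝ, Measurable f →
      Measurable fun z => Measure.dirac (((f z : ℝ) : UnitAddCircle)) s := by
    intro f hf
    exact (Measure.measurable_coe hs).comp (Measure.measurable_dirac.comp
      (measurable_coe_comp hf))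
  refine Measurable.add ?_ ?_
  · exact (hd _ (measurable_circleRep.const_mul 3)).const_mul _
  · exact (((hd _ (measurable_circleRep.div_const 3)).add
      (hd _ ((measurable_circleRep.add_const 1).div_const 3))).add
      (hd _ ((measurable_circleRep.add_const 2).div_const 3))).const_mul _

lemma smul_mono_meas {c : ℝ≥0∞} {μ ν : Measure UnitAddCircle} (h : μ ≤ ν) : c • μ ≤ c • ν := by
  rw [Measure.le_iff'] at h ⊢
  intro s
  simp only [Measure.smul_apply, smul_eq_mul]
  exact mul_le_mul_right (h s) c

lemma Qkern_ge (p : ℝ) (w : UnitAddCircle) (d : ℕ) (hd : d < 3) :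
    ENNReal.ofReal p • Measure.dirac ((((circleRep w + d) / 3 : ℝ) : UnitAddCircle)) ≤ Qkern p w := by
  rw [Measure.le_iff']
  intro s
  simp only [Qkern, Measure.coe_add, Measure.coe_smul, Pi.add_apply, Pi.smul_apply,
    smul_eq_mul, Measure.add_apply]
  interval_cases d
  · push_cast
    rw [add_zero]
    rw [show circleRep w / 3 = circleRep w / 3 from rfl]
    calc ENNReal.ofReal p * Measure.dirac (((circleRep w / 3 : ℝ) : UnitAddCircle)) s
        ≤ ENNReal.ofReal p * ((Measure.dirac (((circleRep w / 3 : ℝ) : UnitAddCircle)) s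
            + Measure.dirac ((((circleRep w + 1) / 3 : ℝ) : UnitAddCircle)) s)
            + Measure.dirac ((((circleRep w + 2) / 3 : ℝ) : UnitAddCircle)) s) :=
          mul_le_mul_right (le_self_add.trans le_self_add) _
      _ ≤ _ := le_add_self
  · push_cast
    calc ENNReal.ofReal p * Measure.dirac ((((circleRep w + 1) / 3 : ℝ) : UnitAddCircle)) s
        ≤ ENNReal.ofReal p * ((Measure.dirac (((circleRep w / 3 : ℝ) : UnitAddCircle)) s
            + Measure.dirac ((((circleRep w + 1) / 3 : ℝ) : UnitAddCircle)) s)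
            + Measure.dirac ((((circleRep w + 2) / 3 : ℝ) : UnitAddCircle)) s) :=
          mul_le_mul_right (le_add_self.trans le_self_add) _
      _ ≤ _ := le_add_self
  · push_cast
    calc ENNReal.ofReal p * Measure.dirac ((((circleRep w + 2) / 3 : ℝ) : UnitAddCircle)) s
        ≤ ENNReal.ofReal p * ((Measure.dirac (((circleRep w / 3 : ℝ) : UnitAddCircle)) s
            + Measure.dirac ((((circleRep w + 1) / 3 : ℝ) : UnitAddCircle)) s)
            + Measure.dirac ((((circleRep w + 2) / 3 : ℝ) : UnitAddCircle)) s) :=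
          mul_le_mul_right le_add_self _
      _ ≤ _ := le_add_self

lemma smul_dirac_le_bind {μ : Measure UnitAddCircle} {c : ℝ≥0∞} {w : UnitAddCircle}
    (h : c • Measure.dirac w ≤ μ) (p : ℝ) :
    c • Qkern p w ≤ μ.bind (Qkern p) := by
  rw [Measure.le_iff]
  intro s hs
  rw [Measure.bind_apply hs (measurable_Qkern p).aemeasurable]
  have hmeas : Measurable fun a => Qkern p a s :=
    (Measure.measurable_coe hs).comp (measurable_Qkern p)
  calc (c • Qkern p w) s = c * Qkern p w s := by
        simp [Measure.smul_apply]
    _ = ∫⁻ a, Qkern p a s ∂(c • Measure.dirac w) := by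
        rw [lintegral_smul_measure, lintegral_dirac' w hmeas, smul_eq_mul]
    _ ≤ ∫⁻ a, Qkern p a s ∂μ := lintegral_mono' h le_rfl

lemma reach (p : ℝ) : ∀ n (z : UnitAddCircle) (k : ℕ), k < 3 ^ n →
    ENNReal.ofReal p ^ n •
      Measure.dirac ((((circleRep z + k) / 3 ^ n : ℝ) : UnitAddCircle)) ≤ Qiter p n z := by
  intro n
  induction n with
  | zero =>
    intro z k hk
    interval_cases k
    simp only [pow_zero, one_smul, Nat.cast_zero, add_zero, div_one, coe_circleRep]
    exact le_rfl
  | succ n ih =>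
    intro z k hk
    set m := k % 3 ^ n with hm
    set d := k / 3 ^ n with hdd
    have hm3 : m < 3 ^ n := Nat.mod_lt _ (Nat.pow_pos (n := n) (by norm_num))
    have hd3 : d < 3 := by
      rw [hdd]
      exact Nat.div_lt_of_lt_mul (by rw [pow_succ] at hk; omega)
    have hkdm : k = 3 ^ n * d + m := by
      exact (Nat.div_add_mod k (3 ^ n)).symm
    have hIH := ih z m hm3
    set w : UnitAddCircle := (((circleRep z + m) / 3 ^ n : ℝ) : UnitAddCircle) with hw
    have hx := circleRep_mem z
    have hrw : circleRep w = (circleRep z + m) / 3 ^ n := by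
      apply circleRep_coe
      · exact div_nonneg (add_nonneg hx.1 (Nat.cast_nonneg m)) (by positivity)
      · rw [div_lt_one (by positivity)]
        have : (m : ℝ) ≤ 3 ^ n - 1 := by
          have : (m : ℝ) + 1 ≤ 3 ^ n := by exact_mod_cast hm3
          linarith
        linarith [hx.2]
    have hpt : ((circleRep w + d) / 3 : ℝ) = (circleRep z + k) / 3 ^ (n + 1) := by
      rw [hrw, hkdm]
      push_cast
      field_simp
      ring
    have h1 : ENNReal.ofReal p • Measure.dirac
        ((((circleRep z + k) / 3 ^ (n + 1) : ℝ) : UnitAddCircle)) ≤ Qkern p w := by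
      rw [← hpt]
      exact Qkern_ge p w d hd3
    have h2 : ENNReal.ofReal p ^ n • Qkern p w ≤ (Qiter p n z).bind (Qkern p) :=
      smul_dirac_le_bind hIH p
    calc ENNReal.ofReal p ^ (n + 1) •
          Measure.dirac ((((circleRep z + k) / 3 ^ (n + 1) : ℝ) : UnitAddCircle))
        = ENNReal.ofReal p ^ n • (ENNReal.ofReal p •
            Measure.dirac ((((circleRep z + k) / 3 ^ (n + 1) : ℝ) : UnitAddCircle))) := by
          rw [← smul_assoc, smul_eq_mul, pow_succ]
      _ ≤ ENNReal.ofReal p ^ n • Qkern p w := smul_mono_meas h1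
      _ ≤ (Qiter p n z).bind (Qkern p) := h2
      _ = Qiter p (n + 1) z := rfl

lemma dense_step (x y : ℝ) (hx0 : 0 ≤ x) (hx1 : x < 1) (hy0 : 0 ≤ y) (hy1 : y < 1) (n : ℕ) :
    ∃ k : ℕ, k < 3 ^ n ∧ |(x + k) / 3 ^ n - y| < (1 / 3 : ℝ) ^ n := by
  have h3n : (0:ℝ) < 3 ^ n := by positivity
  have hpow : ((1:ℝ) / 3) ^ n = 1 / 3 ^ n := by rw [div_pow, one_pow]
  set t : ℝ := 3 ^ n * y - x with ht
  by_cases hneg : t < 0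
  · refine ⟨0, pow_pos (by norm_num) n, ?_⟩
    have h1 : (x + (0:ℕ)) / 3 ^ n - y = -t / 3 ^ n := by
      push_cast; rw [ht]; field_simp; ring
    rw [h1, hpow, abs_of_nonneg (div_nonneg (by linarith) h3n.le)]
    rw [div_lt_div_iff₀ h3n h3n]
    have : -t ≤ x := by rw [ht]; nlinarith
    nlinarith
  · push_neg at hneg
    have htlt : t < 3 ^ n := by
      have : (3:ℝ) ^ n * y < 3 ^ n := by
        nlinarith
      nlinarith
    have hcast : ((⌊t⌋.toNat : ℕ) : ℝ) = (⌊t⌋ : ℝ) := by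
      exact_mod_cast Int.toNat_of_nonneg (Int.floor_nonneg.mpr hneg)
    refine ⟨⌊t⌋.toNat, ?_, ?_⟩
    · have h1 : ((⌊t⌋.toNat : ℕ) : ℝ) < ((3 ^ n : ℕ) : ℝ) := by
        rw [hcast]; push_cast
        exact lt_of_le_of_lt (Int.floor_le t) htlt
      exact_mod_cast h1
    · have hfl : (⌊t⌋ : ℝ) ≤ t := Int.floor_le t
      have hfu : t < (⌊t⌋ : ℝ) + 1 := Int.lt_floor_add_one t
      have h1 : (x + (⌊t⌋.toNat : ℕ)) / 3 ^ n - y = ((⌊t⌋.toNat : ℝ) - t) / 3 ^ n := by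
        push_cast
        field_simp
        ring
      rw [h1, hpow, abs_div, abs_of_pos h3n]
      rw [div_lt_div_iff₀ h3n h3n]
      rw [hcast, abs_of_nonpos (by linarith)]
      nlinarith


/-- Topological irreducibility of the chain `Q` (Example 5.3): from every `z ∈ 𝕋`, every
nonempty open set is reached with positive probability in some number of steps; equivalently,
`⋃_n supp Q^n(z,·)` is dense in `𝕋`. -/
theorem Qiter_topologically_irreducible (p : ℝ) (hp : 0 < p) (hp6 : p < 1 / 6)
    (z : UnitAddCircle) (U : Set UnitAddCircle) (hU : IsOpen U) (hUne : U.Nonempty) :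
    ∃ n : ℕ, 0 < Qiter p n z U := by
  obtain ⟨u, hu⟩ := hUne
  obtain ⟨ε, hε, hball⟩ := Metric.isOpen_iff.mp hU u hu
  obtain ⟨n, hn⟩ : ∃ n : ℕ, ((1:ℝ) / 3) ^ n < ε :=
    exists_pow_lt_of_lt_one hε (by norm_num)
  have hx := circleRep_mem z
  have hy := circleRep_mem u
  obtain ⟨k, hk, hdiff⟩ := dense_step (circleRep z) (circleRep u) hx.1 hx.2 hy.1 hy.2 n
  set w : UnitAddCircle := (((circleRep z + k) / 3 ^ n : ℝ) : UnitAddCircle) with hw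
  have hwU : w ∈ U := by
    apply hball
    rw [Metric.mem_ball]
    have hu' : u = ((circleRep u : ℝ) : UnitAddCircle) := (coe_circleRep u).symm
    have hsub : w - u = ((((circleRep z + k) / 3 ^ n - circleRep u : ℝ)) : UnitAddCircle) := by
      conv_lhs => rw [hw, hu']
      rw [← AddCircle.coe_sub]
    rw [dist_eq_norm, hsub]
    calc ‖((((circleRep z + k) / 3 ^ n - circleRep u : ℝ)) : UnitAddCircle)‖
        ≤ |(circleRep z + k) / 3 ^ n - circleRep u| := norm_coe_le _
      _ < (1/3 : ℝ) ^ n := hdiff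
      _ < ε := hn
  refine ⟨n, ?_⟩
  have hle := Measure.le_iff'.mp (reach p n z k hk) U
  have hval : (ENNReal.ofReal p ^ n • Measure.dirac w) U = ENNReal.ofReal p ^ n := by
    rw [Measure.smul_apply, smul_eq_mul,
      Measure.dirac_apply_of_mem hwU, mul_one]
  rw [hval] at hle
  exact lt_of_lt_of_le (ENNReal.pow_pos (ENNReal.ofReal_pos.mpr hp) n) hle
end

section
/- The kernel Q admits at least two distinct invariant probability measures; more precisely, there exist Q-invariant probability measures μ₁ and μ₂ on 𝕋 that are mutually singular. (One may take μ₁ giving full mass to the set of points whose ternary digits are eventually 0, and μ₂ giving full mass to the disjoint set of points whose ternary digits are eventually 1.) -/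
open MeasureTheory
open scoped ENNReal

lemma coe_eq_coe_iff_int (x y : ℝ) :
    ((x : ℝ) : UnitAddCircle) = ((y : ℝ) : UnitAddCircle) ↔ ∃ k : ℤ, x = y + k := by
  have hsub : ∀ a b : ℝ, ((a - b : ℝ) : UnitAddCircle)
      = ((a:ℝ):UnitAddCircle) - ((b:ℝ):UnitAddCircle) := fun a b => rfl
  constructor
  · intro h
    have h0 : ((x - y : ℝ) : UnitAddCircle) = 0 := by rw [hsub, h, sub_self]
    obtain ⟨n, hn⟩ := AddCircle.coe_eq_zero_iff (p := (1:ℝ)).mp h0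
    refine ⟨n, ?_⟩
    simp only [zsmul_eq_mul, mul_one] at hn
    linarith
  · rintro ⟨k, rfl⟩
    have h0 : ((y + k - y : ℝ) : UnitAddCircle) = 0 :=
      AddCircle.coe_eq_zero_iff (p := (1:ℝ)).mpr ⟨k, by simp [zsmul_eq_mul]⟩
    rw [hsub] at h0
    exact sub_eq_zero.mp h0

noncomputable def rr : List (Fin 3) → ℝ
  | [] => 0
  | j :: t => (rr t + (j : ℕ)) / 3

lemma rr_nonneg (s : List (Fin 3)) : 0 ≤ rr s := by
  induction s with
  | nil => simp [rr]
  | cons j t ih => simp only [rr]; positivity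

lemma rr_lt_one (s : List (Fin 3)) : rr s < 1 := by
  induction s with
  | nil => norm_num [rr]
  | cons j t ih =>
    have hj : ((j : ℕ) : ℝ) ≤ 2 := by
      have := j.is_lt
      exact_mod_cast Nat.lt_succ_iff.mp this
    simp only [rr]
    linarith

noncomputable def r2 (s : List (Fin 3)) : ℝ :=
  if rr s < 1/2 then rr s + 1/2 else rr s - 1/2

lemma r2_nonneg (s : List (Fin 3)) : 0 ≤ r2 s := by
  unfold r2; split <;> [linarith [rr_nonneg s]; linarith]

lemma r2_lt_one (s : List (Fin 3)) : r2 s < 1 := by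
  unfold r2; split <;> [linarith; linarith [rr_lt_one s]]

noncomputable def pt1 (s : List (Fin 3)) : UnitAddCircle := ((rr s : ℝ) : UnitAddCircle)
noncomputable def pt2 (s : List (Fin 3)) : UnitAddCircle := ((r2 s : ℝ) : UnitAddCircle)

lemma Qkern_coe (p : ℝ) {x : ℝ} (h0 : 0 ≤ x) (h1 : x < 1) :
    Qkern p ((x : ℝ) : UnitAddCircle) =
      ENNReal.ofReal (1 - 3 * p) • Measure.dirac (((3 * x : ℝ) : UnitAddCircle))
        + ENNReal.ofReal p •
          (Measure.dirac (((x / 3 : ℝ) : UnitAddCircle))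
            + Measure.dirac ((((x + 1) / 3 : ℝ) : UnitAddCircle))
            + Measure.dirac ((((x + 2) / 3 : ℝ) : UnitAddCircle))) := by
  simp [Qkern, circleRep_coe h0 h1]

lemma coe_triple1 (s : List (Fin 3)) :
    ((3 * rr s : ℝ) : UnitAddCircle) = pt1 s.tail := by
  cases s with
  | nil => show _ = ((rr [] : ℝ) : UnitAddCircle); norm_num [rr]
  | cons j t =>
    show _ = ((rr t : ℝ) : UnitAddCircle)
    rw [coe_eq_coe_iff_int]
    exact ⟨(j : ℕ), by simp [rr]; ring⟩

lemma Qkern_pt1 (p : ℝ) (s : List (Fin 3)) :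
    Qkern p (pt1 s) =
      ENNReal.ofReal (1 - 3 * p) • Measure.dirac (pt1 s.tail)
        + ENNReal.ofReal p •
          (Measure.dirac (pt1 (0 :: s)) + Measure.dirac (pt1 (1 :: s))
            + Measure.dirac (pt1 (2 :: s))) := by
  rw [pt1, Qkern_coe p (rr_nonneg s) (rr_lt_one s), coe_triple1]
  have e0 : rr s / 3 = rr (0 :: s) := by simp [rr]
  have e1 : (rr s + 1) / 3 = rr (1 :: s) := by norm_num [rr]
  have e2 : (rr s + 2) / 3 = rr (2 :: s) := by norm_num [rr]
  rw [e0, e1, e2]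
  rfl

lemma v0 : ((0 : Fin 3) : ℕ) = 0 := rfl
lemma v1 : ((1 : Fin 3) : ℕ) = 1 := rfl
lemma v2 : ((2 : Fin 3) : ℕ) = 2 := rfl

lemma coe_triple2 (s : List (Fin 3)) :
    ((3 * r2 s : ℝ) : UnitAddCircle) = pt2 s.tail := by
  cases s with
  | nil =>
    show _ = ((r2 [] : ℝ) : UnitAddCircle)
    rw [coe_eq_coe_iff_int]
    refine ⟨1, ?_⟩
    norm_num [r2, rr]
  | cons j t =>
    show _ = ((r2 t : ℝ) : UnitAddCircle)
    rw [coe_eq_coe_iff_int]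
    rw [r2, r2, rr]
    split_ifs with h1 h2 h2
    · exact ⟨(j : ℕ) + 1, by push_cast; ring⟩
    · exact ⟨(j : ℕ) + 2, by push_cast; ring⟩
    · exact ⟨(j : ℕ) - 2, by push_cast; ring⟩
    · exact ⟨(j : ℕ) - 1, by push_cast; ring⟩

lemma Qkern_pt2 (p : ℝ) (s : List (Fin 3)) :
    Qkern p (pt2 s) =
      ENNReal.ofReal (1 - 3 * p) • Measure.dirac (pt2 s.tail)
        + ENNReal.ofReal p •
          (Measure.dirac (pt2 (0 :: s)) + Measure.dirac (pt2 (1 :: s))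
            + Measure.dirac (pt2 (2 :: s))) := by
  rw [pt2, Qkern_coe p (r2_nonneg s) (r2_lt_one s), coe_triple2]
  congr 1
  by_cases h : rr s < 1/2
  · have c0 : r2 s / 3 = r2 (2 :: s) := by
      rw [r2, r2, rr, v2]; push_cast
      split_ifs <;> linarith [rr_nonneg s, rr_lt_one s]
    have c1 : (r2 s + 1) / 3 = r2 (0 :: s) := by
      simp only [r2, rr, v0]; push_cast
      split_ifs <;> linarith [rr_nonneg s, rr_lt_one s]
    have c2 : (r2 s + 2) / 3 = r2 (1 :: s) := by
      simp only [r2, rr, v1]; push_cast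
      split_ifs <;> linarith [rr_nonneg s, rr_lt_one s]
    rw [c0, c1, c2]
    show _ • (Measure.dirac (pt2 (2::s)) + Measure.dirac (pt2 (0::s)) + Measure.dirac (pt2 (1::s))) = _
    congr 1
    abel
  · have c0 : r2 s / 3 = r2 (1 :: s) := by
      simp only [r2, rr, v1]; push_cast
      split_ifs <;> linarith [rr_nonneg s, rr_lt_one s]
    have c1 : (r2 s + 1) / 3 = r2 (2 :: s) := by
      rw [r2, r2, rr, v2]; push_cast
      split_ifs <;> linarith [rr_nonneg s, rr_lt_one s]
    have c2 : (r2 s + 2) / 3 = r2 (0 :: s) := by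
      simp only [r2, rr, v0]; push_cast
      split_ifs <;> linarith [rr_nonneg s, rr_lt_one s]
    rw [c0, c1, c2]
    show _ • (Measure.dirac (pt2 (1::s)) + Measure.dirac (pt2 (2::s)) + Measure.dirac (pt2 (0::s))) = _
    congr 1
    abel

def consEquiv : Fin 3 × List (Fin 3) ≃ ↥(({([] : List (Fin 3))} : Set (List (Fin 3)))ᶜ) where
  toFun := fun x => ⟨x.1 :: x.2, by simp⟩
  invFun := fun y => (y.1.head!, y.1.tail)
  left_inv := fun x => rfl
  right_inv := by
    rintro ⟨l, hl⟩
    have hl' : l ≠ [] := by simpa using hl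
    exact Subtype.ext (List.cons_head!_tail hl')

/-- Splitting a sum over lists into nil and cons parts. -/
lemma tsum_split (G : List (Fin 3) → ℝ≥0∞) :
    ∑' s, G s = G [] + ∑' x : Fin 3 × List (Fin 3), G (x.1 :: x.2) := by
  classical
  have h := Summable.tsum_add_tsum_compl (s := ({([] : List (Fin 3))} : Set (List (Fin 3))))
    (f := G) ENNReal.summable ENNReal.summable
  rw [← h, tsum_singleton]
  congr 1
  exact ((Equiv.tsum_eq consEquiv (fun y => G (y : List (Fin 3)))).symm).trans
    (tsum_congr fun c => rfl)

lemma tsum_prod_const (h : List (Fin 3) → ℝ≥0∞) :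
    ∑' x : Fin 3 × List (Fin 3), h x.2 = 3 * ∑' t, h t := by
  rw [ENNReal.tsum_prod' (f := fun x : Fin 3 × List (Fin 3) => h x.2)]
  rw [tsum_fintype]
  simp [Finset.sum_const, Finset.card_univ]

noncomputable def mu (w : ℝ≥0∞) (F : List (Fin 3) → UnitAddCircle) : Measure UnitAddCircle :=
  (1 - 3*w) • Measure.sum (fun s => w ^ s.length • Measure.dirac (F s))

lemma mu_apply (w : ℝ≥0∞) (F : List (Fin 3) → UnitAddCircle) {A : Set UnitAddCircle}
    (hA : MeasurableSet A) :
    mu w F A = (1 - 3*w) * ∑' s, w ^ s.length * Measure.dirac (F s) A := by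
  rw [mu, Measure.smul_apply, Measure.sum_apply _ hA]
  simp [Measure.smul_apply, smul_eq_mul]

lemma bind_mu (p : ℝ) (hp : 0 < p) (hp6 : p < 1/6) (F : List (Fin 3) → UnitAddCircle)
    (hF : ∀ s, Qkern p (F s) =
      ENNReal.ofReal (1 - 3 * p) • Measure.dirac (F s.tail)
        + ENNReal.ofReal p •
          (Measure.dirac (F (0 :: s)) + Measure.dirac (F (1 :: s))
            + Measure.dirac (F (2 :: s)))) :
    (mu (ENNReal.ofReal (p / (1 - 3*p))) F).bind (Qkern p) = mu (ENNReal.ofReal (p / (1 - 3*p))) F := by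
  set w : ℝ≥0∞ := ENNReal.ofReal (p / (1 - 3*p)) with hw
  set q : ℝ≥0∞ := ENNReal.ofReal (1 - 3*p) with hq
  set P : ℝ≥0∞ := ENNReal.ofReal p with hP
  have h13 : (0:ℝ) < 1 - 3*p := by linarith
  have hqw : q * w = P := by
    rw [hq, hw, hP, ← ENNReal.ofReal_mul h13.le]
    congr 1
    field_simp
  have hq3 : q + 3 * P = 1 := by
    rw [hq, hP, show (3:ℝ≥0∞) = ENNReal.ofReal 3 by simp, ← ENNReal.ofReal_mul (by norm_num),
      ← ENNReal.ofReal_add h13.le (by linarith)]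
    norm_num
  ext A hA
  have hmeasA : Measurable (fun z => Qkern p z A) :=
    (Measure.measurable_coe hA).comp (measurable_Qkern p)
  have lhs_eq : (mu w F).bind (Qkern p) A
      = (1 - 3*w) * ∑' s, w ^ s.length * Qkern p (F s) A := by
    rw [Measure.bind_apply hA (measurable_Qkern p).aemeasurable, mu, lintegral_smul_measure,
      lintegral_sum_measure]
    simp only [lintegral_smul_measure, lintegral_dirac' _ hmeasA, smul_eq_mul]
  rw [lhs_eq, mu_apply _ _ hA]
  congr 1
  -- now the tsum identity
  set D : List (Fin 3) → ℝ≥0∞ := fun s => Measure.dirac (F s) A with hD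
  have happ : ∀ s, Qkern p (F s) A = q * D s.tail + P * (D (0::s) + D (1::s) + D (2::s)) := by
    intro s
    rw [hF s]
    simp only [Measure.add_apply, Measure.smul_apply, smul_eq_mul, hD]
  set T : ℝ≥0∞ := ∑' s, w ^ s.length * D s with hT0
  set T' : ℝ≥0∞ := ∑' x : Fin 3 × List (Fin 3), w ^ x.2.length * D (x.1 :: x.2) with hT'0
  have hT : T = D [] + w * T' := by
    rw [hT0, tsum_split (fun s => w ^ s.length * D s)]
    congr 1
    · simp
    · rw [hT'0, ← ENNReal.tsum_mul_left]
      congr 1 with x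
      rw [List.length_cons, pow_succ]
      ring
  have hS1 : ∑' s : List (Fin 3), w ^ s.length * D s.tail = D [] + w * (3 * T) := by
    rw [tsum_split (fun s => w ^ s.length * D s.tail)]
    congr 1
    · simp
    · have hcong : ∀ x : Fin 3 × List (Fin 3),
          w ^ (x.1 :: x.2).length * D (x.1 :: x.2).tail = w * (w ^ x.2.length * D x.2) := by
        intro x
        rw [List.length_cons, pow_succ, List.tail_cons]
        ring
      rw [tsum_congr hcong, ENNReal.tsum_mul_left]
      congr 1
      rw [tsum_prod_const (fun t => w ^ t.length * D t), hT0]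
  have hS2 : ∑' s : List (Fin 3), w ^ s.length * (D (0::s) + D (1::s) + D (2::s)) = T' := by
    have h1 : ∑' s : List (Fin 3), w ^ s.length * (D (0::s) + D (1::s) + D (2::s))
        = (∑' s : List (Fin 3), w ^ s.length * D (0::s))
          + (∑' s : List (Fin 3), w ^ s.length * D (1::s))
          + (∑' s : List (Fin 3), w ^ s.length * D (2::s)) := by
      rw [← ENNReal.tsum_add, ← ENNReal.tsum_add]
      exact tsum_congr fun s => by ring
    have h2 : (∑' a : Fin 3, ∑' s : List (Fin 3), w ^ s.length * D (a::s))
        = (∑' s : List (Fin 3), w ^ s.length * D (0::s))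
          + (∑' s : List (Fin 3), w ^ s.length * D (1::s))
          + (∑' s : List (Fin 3), w ^ s.length * D (2::s)) := by
      rw [tsum_fintype, Fin.sum_univ_three]
    have h3 : T' = ∑' a : Fin 3, ∑' s : List (Fin 3), w ^ s.length * D (a::s) :=
      ENNReal.tsum_prod' (f := fun x : Fin 3 × List (Fin 3) => w ^ x.2.length * D (x.1 :: x.2))
    rw [h1, h3, h2]
  calc ∑' s : List (Fin 3), w ^ s.length * Qkern p (F s) A
      = ∑' s : List (Fin 3), (q * (w ^ s.length * D s.tail)
          + P * (w ^ s.length * (D (0::s) + D (1::s) + D (2::s)))) :=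
        tsum_congr fun s => by rw [happ s]; ring
    _ = q * (∑' s : List (Fin 3), w ^ s.length * D s.tail)
          + P * (∑' s : List (Fin 3), w ^ s.length * (D (0::s) + D (1::s) + D (2::s))) := by
        rw [ENNReal.tsum_add, ENNReal.tsum_mul_left, ENNReal.tsum_mul_left]
    _ = q * (D [] + w * (3 * T)) + P * T' := by rw [hS1, hS2]
    _ = (q + 3 * P) * T := by rw [hT, ← hqw]; ring
    _ = T := by rw [hq3, one_mul]

lemma mass_eq (w : ℝ≥0∞) :
    ∑' s : List (Fin 3), w ^ s.length = (1 - 3 * w)⁻¹ := by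
  classical
  have h1 : ∑' s : List (Fin 3), w ^ s.length
      = ∑' x : Σ n : ℕ, Fin n → Fin 3, w ^ ((List.equivSigmaTuple (α := Fin 3)).symm x).length :=
    (Equiv.tsum_eq (List.equivSigmaTuple (α := Fin 3)).symm (fun s => w ^ s.length)).symm
  have h2 : ∀ x : Σ n : ℕ, Fin n → Fin 3,
      w ^ ((List.equivSigmaTuple (α := Fin 3)).symm x).length = w ^ x.1 := by
    rintro ⟨n, g⟩
    simp [List.equivSigmaTuple]
  rw [h1, tsum_congr h2, ENNReal.tsum_sigma' (f := fun x : Σ n : ℕ, Fin n → Fin 3 => w ^ x.1)]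
  have h3 : ∀ n : ℕ, (∑' _ : Fin n → Fin 3, w ^ n) = 3 ^ n * w ^ n := by
    intro n
    rw [tsum_fintype]
    simp [Finset.sum_const, Finset.card_univ, Fintype.card_fun]
  calc ∑' n : ℕ, ∑' _ : Fin n → Fin 3, w ^ n = ∑' n : ℕ, 3 ^ n * w ^ n := tsum_congr h3
    _ = ∑' n : ℕ, (3 * w) ^ n := by exact tsum_congr fun n => (mul_pow 3 w n).symm
    _ = (1 - 3 * w)⁻¹ := ENNReal.tsum_geometric (3 * w)

lemma mu_prob (w : ℝ≥0∞) (h3w : 3 * w < 1) (F : List (Fin 3) → UnitAddCircle) :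
    IsProbabilityMeasure (mu w F) := by
  constructor
  rw [mu_apply _ _ MeasurableSet.univ]
  have : ∀ s : List (Fin 3), Measure.dirac (F s) Set.univ = 1 := fun s => by simp
  simp only [this, mul_one]
  rw [mass_eq]
  exact ENNReal.mul_inv_cancel (by simpa [pos_iff_ne_zero] using (tsub_pos_of_lt h3w).ne')
    (lt_of_le_of_lt tsub_le_self ENNReal.one_lt_top).ne

lemma mu_null (w : ℝ≥0∞) (F : List (Fin 3) → UnitAddCircle) {B : Set UnitAddCircle}
    (hB : MeasurableSet B) (h : ∀ s, F s ∉ B) : mu w F B = 0 := by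
  rw [mu_apply w F hB]
  have hz : ∀ s : List (Fin 3), Measure.dirac (F s) B = 0 := fun s => by
    rw [Measure.dirac_apply' _ hB]
    simp [Set.indicator_of_notMem (h s)]
  simp [hz]

lemma rr_triadic (s : List (Fin 3)) : ∃ a : ℕ, rr s = (a : ℝ) / 3 ^ s.length := by
  induction s with
  | nil => exact ⟨0, by simp [rr]⟩
  | cons j t ih =>
    obtain ⟨a, ha⟩ := ih
    refine ⟨a + (j : ℕ) * 3 ^ t.length, ?_⟩
    have h3 : (0:ℝ) < 3 ^ t.length := by positivity
    rw [rr, ha, List.length_cons, pow_succ]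
    push_cast
    rw [div_add' _ _ _ h3.ne', div_div]

lemma pt1_ne_pt2 (s t : List (Fin 3)) : pt1 s ≠ pt2 t := by
  intro h
  rw [pt1, pt2, coe_eq_coe_iff_int] at h
  obtain ⟨k, hk⟩ := h
  obtain ⟨a, ha⟩ := rr_triadic s
  obtain ⟨b, hb⟩ := rr_triadic t
  have hε : ∃ ε : ℤ, (ε = 1 ∨ ε = -1) ∧ r2 t = rr t + (ε : ℝ) / 2 := by
    unfold r2
    split_ifs
    · exact ⟨1, Or.inl rfl, by push_cast; ring⟩
    · exact ⟨-1, Or.inr rfl, by push_cast; ring⟩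
  obtain ⟨ε, hε1, hr2⟩ := hε
  set n := s.length
  set m := t.length
  have h3n : (0:ℝ) < 3 ^ n := by positivity
  have h3m : (0:ℝ) < 3 ^ m := by positivity
  rw [hr2, ha, hb] at hk
  have hreal : 2 * (a:ℝ) * 3^m = 2 * b * 3^n + ε * (3^n * 3^m) + 2 * k * (3^n * 3^m) := by
    field_simp at hk
    nlinarith [hk]
  have key : 2 * (a:ℤ) * 3^m = 2 * b * 3^n + ε * (3^n * 3^m) + 2 * k * (3^n * 3^m) := by
    exact_mod_cast hreal
  have hE : Even (2 * (a:ℤ) * 3^m - 2 * b * 3^n - 2 * k * (3^n * 3^m)) :=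
    ⟨a * 3^m - b * 3^n - k * (3^n * 3^m), by ring⟩
  have hO : Odd (2 * (a:ℤ) * 3^m - 2 * b * 3^n - 2 * k * (3^n * 3^m)) := by
    have h35 : (2 * (a:ℤ) * 3^m - 2 * b * 3^n - 2 * k * (3^n * 3^m)) = ε * (3^n * 3^m) := by
      rw [key]; ring
    rw [h35]
    have hodd3 : Odd ((3:ℤ)^n * 3^m) := (Odd.pow ⟨1, by ring⟩).mul (Odd.pow ⟨1, by ring⟩)
    rcases hε1 with rfl | rfl
    · simpa using hodd3
    · simpa using hodd3.neg
  exact (Int.not_odd_iff_even.mpr hE) hO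

/-- Example 5.3: the kernel `Q` possesses at least two distinct — indeed mutually
singular — invariant probability measures. -/
theorem Qkern_two_invariant_measures (p : ℝ) (hp : 0 < p) (hp6 : p < 1 / 6) :
    ∃ μ₁ μ₂ : Measure UnitAddCircle,
      IsProbabilityMeasure μ₁ ∧ IsProbabilityMeasure μ₂ ∧
      μ₁.bind (Qkern p) = μ₁ ∧ μ₂.bind (Qkern p) = μ₂ ∧
      μ₁ ≠ μ₂ ∧ μ₁.MutuallySingular μ₂ := by
  set w : ℝ≥0∞ := ENNReal.ofReal (p / (1 - 3*p)) with hw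
  have h13 : (0:ℝ) < 1 - 3*p := by linarith
  have h3w : 3 * w < 1 := by
    rw [hw, show (3:ℝ≥0∞) = ENNReal.ofReal 3 by simp,
      ← ENNReal.ofReal_mul (by norm_num)]
    rw [ENNReal.ofReal_lt_one]
    have h' : 3 * (p / (1 - 3*p)) = 3 * p / (1 - 3*p) := by ring
    rw [h', div_lt_one h13]
    linarith
  have hBmeas : MeasurableSet (Set.range pt2) := (Set.countable_range pt2).measurableSet
  have hμ1B : mu w pt1 (Set.range pt2) = 0 :=
    mu_null _ _ hBmeas (fun s hs => by
      obtain ⟨t, ht⟩ := hs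
      exact pt1_ne_pt2 s t ht.symm)
  have hμ2Bc : mu w pt2 (Set.range pt2)ᶜ = 0 :=
    mu_null _ _ hBmeas.compl (fun s hs => hs ⟨s, rfl⟩)
  have hprob2 : IsProbabilityMeasure (mu w pt2) := mu_prob w h3w pt2
  refine ⟨mu w pt1, mu w pt2, mu_prob w h3w pt1, hprob2,
    bind_mu p hp hp6 pt1 (fun s => Qkern_pt1 p s),
    bind_mu p hp hp6 pt2 (fun s => Qkern_pt2 p s), ?_, ?_⟩
  · intro he
    have h2 : (mu w pt1) (Set.range pt2)ᶜ = 0 := by rw [he]; exact hμ2Bc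
    have h1 := measure_union_le (μ := mu w pt1) (Set.range pt2) (Set.range pt2)ᶜ
    rw [Set.union_compl_self, hμ1B, h2, add_zero,
      (mu_prob w h3w pt1).measure_univ] at h1
    simp at h1
  · exact ⟨Set.range pt2, hBmeas, hμ1B, hμ2Bc⟩
end
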